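/- arXiv:2410.11760 — 4 statements merged into one kernel-verified Lean document; each statement's English description precedes it below -/
import Mathlib

section
/- Let g : [0,∞) → ℝ satisfy g_t > 0 for all t ≥ 0 and be right-differentiable at t = 0, i.e. (g_t − g_0)/t converges to some g'_0 ∈ ℝ as t → 0⁺. Then for every x ∈ ℝ and every y ∈ ℝ with y/g_0 ∈ ∂|·|(x), the family of second-order difference quotient functions Δ_t²G(x|y)(z) := (g_t|x + t z| − g_t|x| − t y z)/t², for t > 0, Mosco epi-converges on ℝ to the function z ↦ I_{K_{x, y/g_0}}(z) + g'_0 (y/g_0) z. Precisely, for every z ∈ ℝ: (1) if z ∈ K_{x,y/g_0}, then Δ_t²G(x|y)(z) converges to g'_0 (y/g_0) z as t → 0⁺; (2) for every family (z_t)_{t>0} converging to z as t → 0⁺: if z ∈ K_{x,y/g_0} then liminf_{t→0⁺} Δ_t²G(x|y)(z_t) ≥ g'_0 (y/g_0) z, and if z ∉ K_{x,y/g_0} then Δ_t²G(x|y)(z_t) tends to +∞. -/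
open Filter Topology Set

/-- The set `K_{x,w}` associated with the second-order epi-derivative of the absolute value. -/
def Kset (x w : ℝ) : Set ℝ :=
  if x ≠ 0 then Set.univ
  else if w = 1 then Set.Ici 0
  else if w = -1 then Set.Iic 0
  else {0}

/-- The parameterized function `G(t,x) = g_t |x|` is twice epi-differentiable at `x` for
`y` with `y / g_0 ∈ ∂|·|(x)`: the family of second-order difference quotients
`Δ_t²G(x|y)(z) = (g_t |x + t z| - g_t |x| - t y z)/t²` Mosco epi-converges, as `t → 0⁺`,
to `z ↦ I_{K_{x, y/g_0}}(z) + g'_0 (y/g_0) z`. -/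
theorem parameterized_abs_twice_epi_differentiable
    (g : ℝ → ℝ) (hg : ∀ t : ℝ, 0 ≤ t → 0 < g t)
    (g0' : ℝ) (hdiff : Tendsto (fun t : ℝ => (g t - g 0) / t) (𝓝[>] (0 : ℝ)) (𝓝 g0'))
    (x y : ℝ) (hy : ∀ w : ℝ, (y / g 0) * (w - x) ≤ |w| - |x|) (z : ℝ) :
    -- (1) if `z ∈ K_{x, y/g_0}`, then the quotient at the constant family `z` converges
    (z ∈ Kset x (y / g 0) →
      Tendsto (fun t : ℝ => (g t * |x + t * z| - g t * |x| - t * y * z) / t ^ 2)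
        (𝓝[>] (0 : ℝ)) (𝓝 (g0' * (y / g 0) * z))) ∧
    -- (2) lower bounds along any family converging to `z`
    (∀ zt : ℝ → ℝ, Tendsto zt (𝓝[>] (0 : ℝ)) (𝓝 z) →
      (z ∈ Kset x (y / g 0) →
        ((g0' * (y / g 0) * z : ℝ) : EReal) ≤ Filter.liminf
          (fun t : ℝ =>
            (((g t * |x + t * zt t| - g t * |x| - t * y * zt t) / t ^ 2 : ℝ) : EReal))
          (𝓝[>] (0 : ℝ))) ∧
      (z ∉ Kset x (y / g 0) →
        Tendsto (fun t : ℝ => (g t * |x + t * zt t| - g t * |x| - t * y * zt t) / t ^ 2)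
          (𝓝[>] (0 : ℝ)) atTop)) := by
  have hg0 : 0 < g 0 := hg 0 le_rfl
  set w := y / g 0 with hwdef
  have hy' : y = g 0 * w := by
    rw [hwdef, mul_div_assoc', mul_comm, mul_div_assoc, div_self hg0.ne', mul_one]
  have hw1 : |w| ≤ 1 := by
    have h1 := hy (x + 1)
    have h2 := hy (x - 1)
    have a1 : |x + 1| - |x| ≤ 1 := by
      have h := abs_sub_abs_le_abs_sub (x + 1) x
      simpa using h
    have a2 : |x - 1| - |x| ≤ 1 := by
      have h := abs_sub_abs_le_abs_sub (x - 1) x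
      have : |x - 1 - x| = 1 := by norm_num
      linarith [this ▸ h]
    rw [abs_le]
    constructor <;> nlinarith
  have hwle : ∀ u : ℝ, w * u ≤ |u| := by
    intro u
    calc w * u ≤ |w * u| := le_abs_self _
      _ = |w| * |u| := abs_mul _ _
      _ ≤ 1 * |u| := mul_le_mul_of_nonneg_right hw1 (abs_nonneg u)
      _ = |u| := one_mul _
  have hwx : w * x = |x| := by
    have h0 := hy 0
    have hle := hwle x
    simp only [abs_zero, zero_sub] at h0
    nlinarith
  have ht0 : Tendsto (fun t : ℝ => t) (𝓝[>] (0:ℝ)) (𝓝 0) :=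
    tendsto_id.mono_right nhdsWithin_le_nhds
  have hpos : ∀ᶠ t in 𝓝[>] (0:ℝ), 0 < t := self_mem_nhdsWithin
  have hgsub : Tendsto (fun t => g t - g 0) (𝓝[>] (0:ℝ)) (𝓝 0) := by
    have h := hdiff.mul ht0
    rw [mul_zero] at h
    refine h.congr' ?_
    filter_upwards [hpos] with t ht
    field_simp
  have hglim : Tendsto g (𝓝[>] (0:ℝ)) (𝓝 (g 0)) := by
    have := hgsub.add_const (g 0)
    simpa using this
  -- x ≠ 0 case: full convergence along any family
  have keyne : x ≠ 0 → ∀ zt : ℝ → ℝ, Tendsto zt (𝓝[>] (0:ℝ)) (𝓝 z) →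
      Tendsto (fun t : ℝ => (g t * |x + t * zt t| - g t * |x| - t * y * zt t) / t ^ 2)
        (𝓝[>] (0:ℝ)) (𝓝 (g0' * w * z)) := by
    intro hx zt hzt
    have hxpos : 0 < |x| := abs_pos.mpr hx
    have hw1' : |w| = 1 := by
      have h2 : |x| ≤ |w| * |x| := by
        calc |x| = w * x := hwx.symm
          _ ≤ |w * x| := le_abs_self _
          _ = |w| * |x| := abs_mul _ _
      have : 1 ≤ |w| := by nlinarith
      linarith
    have hB : Tendsto (fun t => (g t - g 0) / t * (w * zt t)) (𝓝[>] (0:ℝ))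
        (𝓝 (g0' * (w * z))) := hdiff.mul (tendsto_const_nhds.mul hzt)
    have hgoal : g0' * w * z = g0' * (w * z) := by ring
    rw [hgoal]
    refine hB.congr' ?_
    have hsmall : ∀ᶠ t in 𝓝[>] (0:ℝ), t * |zt t| < |x| := by
      have h : Tendsto (fun t => t * |zt t|) (𝓝[>] (0:ℝ)) (𝓝 0) := by
        simpa using ht0.mul hzt.abs
      exact h.eventually_lt_const hxpos
    filter_upwards [hpos, hsmall] with t ht hts
    have habs : |x + t * zt t| = |x| + t * (w * zt t) := by
      have hb : |w * (t * zt t)| ≤ t * |zt t| := by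
        rw [abs_mul, hw1', one_mul, abs_mul, abs_of_pos ht]
      have h1 : 0 < w * (x + t * zt t) := by
        have hn := neg_abs_le (w * (t * zt t))
        nlinarith
      have h2 : |w * (x + t * zt t)| = |x + t * zt t| := by
        rw [abs_mul, hw1', one_mul]
      rw [← h2, abs_of_pos h1]
      have : w * (x + t * zt t) = w * x + w * (t * zt t) := by ring
      rw [this, hwx]; ring
    rw [habs, hy']
    field_simp
    ring
  -- x = 0 : membership characterization
  have hKmem : x = 0 → ∀ u : ℝ, (u ∈ Kset x w ↔ w * u = |u|) := by
    intro hx u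
    subst hx
    simp only [Kset, ne_eq, not_true_eq_false, if_false]
    by_cases h1 : w = 1
    · rw [if_pos h1, h1]
      simp only [mem_Ici, one_mul]
      rw [eq_comm, abs_eq_self]
    · by_cases h2 : w = -1
      · rw [if_neg h1, if_pos h2, h2]
        simp only [mem_Iic, neg_one_mul]
        constructor
        · intro h; rw [abs_of_nonpos h]
        · intro h
          by_contra hc
          push_neg at hc
          rw [abs_of_pos hc] at h
          nlinarith
      · rw [if_neg h1, if_neg h2]
        simp only [mem_singleton_iff]
        have hwlt : |w| < 1 := lt_of_le_of_ne hw1 (by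
          intro h
          rcases abs_eq (by norm_num : (0:ℝ) ≤ 1) |>.mp h with h | h
          · exact h1 h
          · exact h2 h)
        constructor
        · intro h; subst h; simp
        · intro h
          by_contra hc
          have h3 : w * u ≤ |w| * |u| := by
            calc w * u ≤ |w * u| := le_abs_self _
              _ = |w| * |u| := abs_mul _ _
          have h4 : 0 < |u| := abs_pos.mpr hc
          nlinarith
  -- x = 0 : the key decomposition as eventual equality
  have hdecomp : x = 0 → ∀ zt : ℝ → ℝ,
      (fun t : ℝ => (g t * |x + t * zt t| - g t * |x| - t * y * zt t) / t ^ 2) =ᶠ[𝓝[>] (0:ℝ)]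
      (fun t : ℝ => g t * ((|zt t| - w * zt t) / t) + (g t - g 0) / t * (w * zt t)) := by
    intro hx zt
    subst hx
    filter_upwards [hpos] with t ht
    rw [zero_add, abs_mul, abs_of_pos ht, abs_zero, hy']
    field_simp
    ring
  constructor
  · -- part (1)
    intro hz
    rcases eq_or_ne x 0 with hx | hx
    · have hmem := (hKmem hx z).mp hz
      have hB : Tendsto (fun t => (g t - g 0) / t * (w * z)) (𝓝[>] (0:ℝ))
          (𝓝 (g0' * (w * z))) := hdiff.mul_const _
      have hgoal : g0' * w * z = g0' * (w * z) := by ring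
      rw [hgoal]
      refine hB.congr' ?_
      filter_upwards [hdecomp hx (fun _ => z), hpos] with t hdt ht
      rw [hdt, hmem]
      simp
    · exact keyne hx (fun _ => z) tendsto_const_nhds
  · intro zt hzt
    constructor
    · -- liminf bound
      intro hz
      rcases eq_or_ne x 0 with hx | hx
      · have hmem := (hKmem hx z).mp hz
        have hB : Tendsto (fun t => (g t - g 0) / t * (w * zt t)) (𝓝[>] (0:ℝ))
            (𝓝 (g0' * (w * z))) := hdiff.mul (tendsto_const_nhds.mul hzt)
        have hBE : Tendsto (fun t => (((g t - g 0) / t * (w * zt t) : ℝ) : EReal))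
            (𝓝[>] (0:ℝ)) (𝓝 ((g0' * (w * z) : ℝ) : EReal)) := EReal.tendsto_coe.mpr hB
        have hlb : ∀ᶠ t in 𝓝[>] (0:ℝ),
            (((g t - g 0) / t * (w * zt t) : ℝ) : EReal) ≤
            (((g t * |x + t * zt t| - g t * |x| - t * y * zt t) / t ^ 2 : ℝ) : EReal) := by
          filter_upwards [hdecomp hx zt, hpos] with t hdt ht
          rw [EReal.coe_le_coe_iff, hdt]
          have hgt : 0 < g t := hg t ht.le
          have hnn : 0 ≤ |zt t| - w * zt t := by linarith [hwle (zt t)]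
          have : 0 ≤ g t * ((|zt t| - w * zt t) / t) := by positivity
          linarith
        calc ((g0' * w * z : ℝ) : EReal)
            = liminf (fun t => (((g t - g 0) / t * (w * zt t) : ℝ) : EReal)) (𝓝[>] (0:ℝ)) := by
              rw [hBE.liminf_eq]; norm_cast; ring
          _ ≤ _ := liminf_le_liminf hlb
      · have h := keyne hx zt hzt
        have hE : Tendsto (fun t => (((g t * |x + t * zt t| - g t * |x| - t * y * zt t)
            / t ^ 2 : ℝ) : EReal)) (𝓝[>] (0:ℝ)) (𝓝 ((g0' * w * z : ℝ) : EReal)) :=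
          EReal.tendsto_coe.mpr h
        rw [hE.liminf_eq]
    · -- blow-up outside K
      intro hz
      rcases eq_or_ne x 0 with hx | hx
      · have hmem : w * z ≠ |z| := fun h => hz ((hKmem hx z).mpr h)
        have hc : 0 < |z| - w * z := lt_of_le_of_ne (by linarith [hwle z]) (by
          intro h; exact hmem (by linarith))
        set c := |z| - w * z with hcdef
        have hct : Tendsto (fun t => |zt t| - w * zt t) (𝓝[>] (0:ℝ)) (𝓝 c) :=
          hzt.abs.sub (tendsto_const_nhds.mul hzt)
        have hcev : ∀ᶠ t in 𝓝[>] (0:ℝ), c / 2 < |zt t| - w * zt t :=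
          hct.eventually (eventually_gt_nhds (by linarith))
        have hgev : ∀ᶠ t in 𝓝[>] (0:ℝ), g 0 / 2 < g t :=
          hglim.eventually (eventually_gt_nhds (by linarith))
        set L := g0' * (w * z) with hLdef
        have hB : Tendsto (fun t => (g t - g 0) / t * (w * zt t)) (𝓝[>] (0:ℝ)) (𝓝 L) :=
          hdiff.mul (tendsto_const_nhds.mul hzt)
        have hBev : ∀ᶠ t in 𝓝[>] (0:ℝ), L - 1 < (g t - g 0) / t * (w * zt t) :=
          hB.eventually (eventually_gt_nhds (by linarith))
        have hmin : Tendsto (fun t : ℝ => g 0 * c / 4 * t⁻¹ + (L - 1)) (𝓝[>] (0:ℝ)) atTop :=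
          tendsto_atTop_add_const_right _ _
            (tendsto_inv_nhdsGT_zero.const_mul_atTop (by positivity))
        refine tendsto_atTop_mono' _ ?_ hmin
        filter_upwards [hdecomp hx zt, hpos, hcev, hgev, hBev] with t hdt ht hc2 hg2 hB2
        rw [hdt]
        have hinv : 0 < t⁻¹ := inv_pos.mpr ht
        have h1 : g 0 * c / 4 * t⁻¹ ≤ g t * ((|zt t| - w * zt t) / t) := by
          have h0 : g 0 * c / 4 ≤ g t * (|zt t| - w * zt t) := by
            nlinarith [mul_lt_mul'' hg2 hc2 (by positivity : (0:ℝ) ≤ g 0 / 2)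
              (by positivity : (0:ℝ) ≤ c / 2)]
          calc g 0 * c / 4 * t⁻¹ ≤ g t * (|zt t| - w * zt t) * t⁻¹ :=
                mul_le_mul_of_nonneg_right h0 hinv.le
            _ = g t * ((|zt t| - w * zt t) / t) := by rw [mul_assoc, ← div_eq_mul_inv]
        linarith
      · exfalso
        apply hz
        simp [Kset, hx]
end

section
/- Let g : [0,∞) → ℝ satisfy g_t > 0 for all t ≥ 0 and be right-differentiable at t = 0 with right-derivative g'_0 := lim_{t→0⁺}(g_t − g_0)/t. Let x, y ∈ ℝ with y/g_0 ∈ ∂|·|(x) and let z ∈ K_{x, y/g_0}. Then for every family (z_t)_{t>0} of real numbers converging to z as t → 0⁺, one has liminf_{t→0⁺} (g_t|x + t z_t| − g_t|x| − t y z_t)/t² ≥ g'_0 (y/g_0) z. -/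
open Filter Topology Set

theorem liminf_second_order_quotient_parameterized_ge
    (g : ℝ → ℝ) (hg : ∀ t : ℝ, 0 ≤ t → 0 < g t)
    (g0' : ℝ) (hdiff : Tendsto (fun t : ℝ => (g t - g 0) / t) (𝓝[>] (0 : ℝ)) (𝓝 g0'))
    (x y : ℝ) (hy : ∀ w : ℝ, (y / g 0) * (w - x) ≤ |w| - |x|)
    (z : ℝ) (hz : z ∈ Kset x (y / g 0))
    (zt : ℝ → ℝ) (hzt : Tendsto zt (𝓝[>] (0 : ℝ)) (𝓝 z)) :
    ((g0' * (y / g 0) * z : ℝ) : EReal) ≤ Filter.liminf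
      (fun t : ℝ =>
        (((g t * |x + t * zt t| - g t * |x| - t * y * zt t) / t ^ 2 : ℝ) : EReal))
      (𝓝[>] (0 : ℝ)) := by
  set w := y / g 0 with hw
  have hg0 : g 0 ≠ 0 := (hg 0 le_rfl).ne'
  have hyw : w * g 0 = y := div_mul_cancel₀ y hg0
  -- The lower comparison function
  have h1 : Tendsto (fun t : ℝ => (w * zt t) * ((g t - g 0) / t)) (𝓝[>] (0 : ℝ))
      (𝓝 (g0' * w * z)) := by
    have h0 : Tendsto (fun t : ℝ => w * zt t) (𝓝[>] (0 : ℝ)) (𝓝 (w * z)) :=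
      hzt.const_mul w
    have := h0.mul hdiff
    have heq : w * z * g0' = g0' * w * z := by ring
    rwa [heq] at this
  have hE : Tendsto (fun t : ℝ => (((w * zt t) * ((g t - g 0) / t) : ℝ) : EReal))
      (𝓝[>] (0 : ℝ)) (𝓝 ((g0' * w * z : ℝ) : EReal)) :=
    (continuous_coe_real_ereal.tendsto _).comp h1
  rw [← hE.liminf_eq]
  refine Filter.liminf_le_liminf ?_
  filter_upwards [self_mem_nhdsWithin] with t ht
  rw [EReal.coe_le_coe_iff]
  have ht : (0 : ℝ) < t := ht
  have sub : w * (t * zt t) ≤ |x + t * zt t| - |x| := by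
    have := hy (x + t * zt t)
    simpa using this
  rw [← mul_div_assoc, div_le_div_iff₀ ht (by positivity)]
  have hgt : (0 : ℝ) ≤ g t := (hg t ht.le).le
  rw [← hyw]
  nlinarith [mul_le_mul_of_nonneg_left sub hgt, mul_pos ht ht, sq_nonneg t,
    mul_le_mul_of_nonneg_left (mul_le_mul_of_nonneg_left sub hgt) ht.le]
end

section
/- Let g : [0,∞) → ℝ satisfy g_t > 0 for all t ≥ 0 and be right-differentiable at t = 0 with right-derivative g'_0 := lim_{t→0⁺}(g_t − g_0)/t. Let x, y ∈ ℝ with y/g_0 ∈ ∂|·|(x) and let z ∈ ℝ with z ∉ K_{x, y/g_0}. Then for every family (z_t)_{t>0} of real numbers converging to z as t → 0⁺, the quotient (g_t|x + t z_t| − g_t|x| − t y z_t)/t² tends to +∞ as t → 0⁺. -/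
open Filter Topology Set

theorem second_order_quotient_parameterized_tendsto_atTop
    (g : ℝ → ℝ) (hg : ∀ t : ℝ, 0 ≤ t → 0 < g t)
    (g0' : ℝ) (hdiff : Tendsto (fun t : ℝ => (g t - g 0) / t) (𝓝[>] (0 : ℝ)) (𝓝 g0'))
    (x y : ℝ) (hy : ∀ w : ℝ, (y / g 0) * (w - x) ≤ |w| - |x|)
    (z : ℝ) (hz : z ∉ Kset x (y / g 0))
    (zt : ℝ → ℝ) (hzt : Tendsto zt (𝓝[>] (0 : ℝ)) (𝓝 z)) :
    Tendsto (fun t : ℝ => (g t * |x + t * zt t| - g t * |x| - t * y * zt t) / t ^ 2)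
      (𝓝[>] (0 : ℝ)) atTop := by
  have hg0 : 0 < g 0 := hg 0 le_rfl
  have hx : x = 0 := by
    by_contra h
    exact hz (by simp [Kset, h])
  subst hx
  set w : ℝ := y / g 0 with hw
  have hz0 : z ≠ 0 := by
    rintro rfl
    apply hz
    simp only [Kset]
    split_ifs <;> simp
  -- strict inequality w * z < |z|
  have hle : w * z ≤ |z| := by
    have := hy z
    simpa using this
  have hlt : w * z < |z| := by
    rcases lt_or_eq_of_le hle with h | h
    · exact h
    exfalso
    rcases lt_trichotomy z 0 with hzlt | hzeq | hzgt
    · have habs : |z| = -z := abs_of_neg hzlt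
      have hwm : w = -1 := by
        have : w * z = -z := by rw [h, habs]
        field_simp at this
        nlinarith
      apply hz
      simp only [Kset]
      norm_num [hwm]
      exact hzlt.le
    · exact hz0 hzeq
    · have habs : |z| = z := abs_of_pos hzgt
      have hw1 : w = 1 := by
        have : w * z = z := by rw [h, habs]
        nlinarith
      apply hz
      simp [Kset, hw1, le_of_lt hzgt]
  have hyz : y * z < g 0 * |z| := by
    have hy' : y = g 0 * w := by rw [hw]; field_simp [hg0.ne']
    rw [hy']
    have := mul_lt_mul_of_pos_left hlt hg0
    linarith [this]
  -- g tends to g 0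
  have hgc : Tendsto g (𝓝[>] (0 : ℝ)) (𝓝 (g 0)) := by
    have h1 : Tendsto (fun t : ℝ => (g t - g 0) / t * t) (𝓝[>] (0 : ℝ)) (𝓝 (g0' * 0)) :=
      hdiff.mul (tendsto_id.mono_left nhdsWithin_le_nhds)
    have h2 : Tendsto (fun t : ℝ => g t - g 0) (𝓝[>] (0 : ℝ)) (𝓝 (g0' * 0)) := by
      refine h1.congr' ?_
      filter_upwards [self_mem_nhdsWithin] with t ht
      field_simp [ne_of_gt (mem_Ioi.mp ht)]
    have := h2.add_const (g 0)
    simpa using this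
  -- numerator tends to positive limit
  have hnum : Tendsto (fun t : ℝ => g t * |zt t| - y * zt t) (𝓝[>] (0 : ℝ))
      (𝓝 (g 0 * |z| - y * z)) := by
    exact (hgc.mul (hzt.abs)).sub (tendsto_const_nhds.mul hzt)
  have hinv : Tendsto (fun t : ℝ => t⁻¹) (𝓝[>] (0 : ℝ)) atTop := tendsto_inv_nhdsGT_zero
  have hprod := hnum.pos_mul_atTop (by linarith : (0:ℝ) < g 0 * |z| - y * z) hinv
  refine hprod.congr' ?_
  filter_upwards [self_mem_nhdsWithin] with t ht
  have ht0 : 0 < t := mem_Ioi.mp ht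
  have habs : |t * zt t| = t * |zt t| := by
    rw [abs_mul, abs_of_pos ht0]
  field_simp [habs, ne_of_gt ht0]
  rw [zero_add, abs_zero, mul_comm (zt t) t, habs]
  ring
end

section
/- Let g : [0,∞) → ℝ satisfy g_t > 0 for all t ≥ 0 and be right-differentiable at t = 0 with right-derivative g'_0 := lim_{t→0⁺}(g_t − g_0)/t. Let x, y ∈ ℝ with y/g_0 ∈ ∂|·|(x) and let z ∈ K_{x, y/g_0}. Then (g_t|x + t z| − g_t|x| − t y z)/t² converges to g'_0 (y/g_0) z as t → 0⁺. -/
open Filter Topology Set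

theorem second_order_quotient_parameterized_tendsto
    (g : ℝ → ℝ) (hg : ∀ t : ℝ, 0 ≤ t → 0 < g t)
    (g0' : ℝ) (hdiff : Tendsto (fun t : ℝ => (g t - g 0) / t) (𝓝[>] (0 : ℝ)) (𝓝 g0'))
    (x y : ℝ) (hy : ∀ w : ℝ, (y / g 0) * (w - x) ≤ |w| - |x|)
    (z : ℝ) (hz : z ∈ Kset x (y / g 0)) :
    Tendsto (fun t : ℝ => (g t * |x + t * z| - g t * |x| - t * y * z) / t ^ 2)
      (𝓝[>] (0 : ℝ)) (𝓝 (g0' * (y / g 0) * z)) := by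
  set w := y / g 0 with hw
  have hg0 : 0 < g 0 := hg 0 le_rfl
  have hyw : y = g 0 * w := by rw [hw, mul_div_assoc', mul_comm, mul_div_assoc, div_self hg0.ne', mul_one]
  have key : Tendsto (fun t : ℝ => (w * z) * ((g t - g 0) / t)) (𝓝[>] (0:ℝ))
      (𝓝 ((w * z) * g0')) := hdiff.const_mul _
  have heq : ∀ᶠ t in 𝓝[>] (0:ℝ),
      (w * z) * ((g t - g 0) / t)
        = (g t * |x + t * z| - g t * |x| - t * y * z) / t ^ 2 := by
    by_cases hx : x ≠ 0
    · -- w * x = |x|, |w| = 1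
      have h1 : |x| ≤ w * x := by
        have := hy 0
        simp only [abs_zero] at this
        nlinarith
      have h2 : w * x ≤ |x| := by
        have := hy (2 * x)
        have habs : |2 * x| = 2 * |x| := by rw [abs_mul]; norm_num
        nlinarith
      have hwx : w * x = |x| := le_antisymm h2 h1
      have habsx : 0 < |x| := abs_pos.mpr hx
      have hw1 : |w| = 1 := by
        have : w = |x| / x := by rw [eq_div_iff hx]; exact hwx
        rw [this, abs_div, abs_abs, div_self (abs_ne_zero.mpr hx)]
      set δ : ℝ := |x| / (|z| + 1) with hδ
      have hδpos : 0 < δ := div_pos habsx (by positivity)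
      filter_upwards [Ioo_mem_nhdsGT_of_mem (by simp [hδpos] : (0:ℝ) ∈ Ico 0 δ)]
        with t ht
      obtain ⟨ht0, htδ⟩ := ht
      have htz : t * |z| < |x| := by
        have : t * (|z| + 1) < |x| := by
          rw [hδ, lt_div_iff₀ (by positivity)] at htδ
          linarith
        nlinarith
      have habs : |x + t * z| = |x| + t * (w * z) := by
        have h3 : |x + t * z| = |w * (x + t * z)| := by
          rw [abs_mul, hw1, one_mul]
        have h4 : 0 < w * (x + t * z) := by
          have : |t * (w * z)| ≤ t * |z| := by
            rw [abs_mul, abs_mul, abs_of_pos ht0, hw1]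
            nlinarith [abs_nonneg z]
          have := neg_abs_le (t * (w * z))
          nlinarith [hwx]
        rw [h3, abs_of_pos h4, mul_add, hwx]; ring
      rw [habs, hyw]
      field_simp
      ring
    · push_neg at hx
      subst hx
      have hwz : w * z = |z| := by
        simp only [Kset, ne_eq, not_true_eq_false, if_false, ← hw] at hz
        by_cases h1 : w = 1
        · rw [if_pos h1] at hz
          rw [abs_of_nonneg hz, h1, one_mul]
        · by_cases h2 : w = -1
          · rw [if_neg h1, if_pos h2] at hz
            rw [abs_of_nonpos hz, h2]; ring
          · rw [if_neg h1, if_neg h2] at hz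
            simp only [Set.mem_singleton_iff] at hz
            simp [hz]
      filter_upwards [self_mem_nhdsWithin] with t ht
      have ht0 : 0 < t := ht
      have habs : |(0:ℝ) + t * z| = t * |z| := by
        rw [zero_add, abs_mul, abs_of_pos ht0]
      rw [habs, hyw, ← hwz]
      field_simp
      ring
  have := key.congr' heq
  have hlim : (w * z) * g0' = g0' * w * z := by ring
  rwa [hlim] at this
end
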